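/- For a spherical triangle with sides a, b and included angle C, the area satisfies tan(|σ|/2) = sin C / (cot(a/2)·cot(b/2) + cos C). -/

import Mathlib

open Real Set

set_option maxHeartbeats 2000000 in
/-- Area formula of SAS type: for a spherical triangle with sides `a, b` and
included angle `C`, the area `|σ| = A + B + C - π` satisfies
`tan (|σ|/2) = sin C / (cot (a/2) * cot (b/2) + cos C)`. -/
theorem spherical_area_SAS
    (a b c A B C : ℝ)
    (ha : a ∈ Ioo 0 π) (hb : b ∈ Ioo 0 π) (hc : c ∈ Ioo 0 π)
    (hA : A ∈ Ioo 0 π) (hB : B ∈ Ioo 0 π) (hC : C ∈ Ioo 0 π)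
    (lawA : Real.cos a = Real.cos b * Real.cos c + Real.sin b * Real.sin c * Real.cos A)
    (lawB : Real.cos b = Real.cos a * Real.cos c + Real.sin a * Real.sin c * Real.cos B)
    (lawC : Real.cos c = Real.cos a * Real.cos b + Real.sin a * Real.sin b * Real.cos C) :
    Real.tan ((A + B + C - π) / 2) =
      Real.sin C / (Real.cot (a / 2) * Real.cot (b / 2) + Real.cos C) := by
  obtain ⟨ha0, ha2⟩ := ha
  obtain ⟨hb0, hb2⟩ := hb
  obtain ⟨hc0, hc2⟩ := hc
  obtain ⟨hA0, hA2⟩ := hA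
  obtain ⟨hB0, hB2⟩ := hB
  obtain ⟨hC0, hC2⟩ := hC
  have hsa : 0 < Real.sin a := Real.sin_pos_of_pos_of_lt_pi ha0 ha2
  have hsb : 0 < Real.sin b := Real.sin_pos_of_pos_of_lt_pi hb0 hb2
  have hsc : 0 < Real.sin c := Real.sin_pos_of_pos_of_lt_pi hc0 hc2
  have hsA : 0 < Real.sin A := Real.sin_pos_of_pos_of_lt_pi hA0 hA2
  have hsB : 0 < Real.sin B := Real.sin_pos_of_pos_of_lt_pi hB0 hB2
  have hsC : 0 < Real.sin C := Real.sin_pos_of_pos_of_lt_pi hC0 hC2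
  have hca1 : Real.cos a < 1 := by
    have := Real.cos_lt_cos_of_nonneg_of_le_pi le_rfl ha2.le ha0
    simpa using this
  have hc1 : 0 < Real.cos (a/2) :=
    Real.cos_pos_of_mem_Ioo ⟨by linarith [Real.pi_pos], by linarith⟩
  have hc2' : 0 < Real.cos (b/2) :=
    Real.cos_pos_of_mem_Ioo ⟨by linarith [Real.pi_pos], by linarith⟩
  have hc3 : 0 < Real.cos (c/2) :=
    Real.cos_pos_of_mem_Ioo ⟨by linarith [Real.pi_pos], by linarith⟩
  have hs1 : 0 < Real.sin (a/2) := Real.sin_pos_of_pos_of_lt_pi (by linarith) (by linarith [Real.pi_pos])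
  have hs2 : 0 < Real.sin (b/2) := Real.sin_pos_of_pos_of_lt_pi (by linarith) (by linarith [Real.pi_pos])
  -- abbreviations
  set x := Real.cos a with hxdef
  set y := Real.cos b with hydef
  set z := Real.cos c with hzdef
  set sa := Real.sin a with hsadef
  set sb := Real.sin b with hsbdef
  set sc := Real.sin c with hscdef
  set m := sa * sb * Real.sin C with hmdef
  have hmpos : 0 < m := by positivity
  -- Pythagorean identities
  have Ha : sa ^ 2 = 1 - x ^ 2 := by rw [hsadef, hxdef]; exact Real.sin_sq a
  have Hb : sb ^ 2 = 1 - y ^ 2 := by rw [hsbdef, hydef]; exact Real.sin_sq b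
  have Hc : sc ^ 2 = 1 - z ^ 2 := by rw [hscdef, hzdef]; exact Real.sin_sq c
  -- division forms for the cosines of the angles
  have hcA' : Real.cos A = (x - y * z) / (sb * sc) := by
    rw [eq_div_iff (by positivity)]; linarith [lawA]
  have hcB' : Real.cos B = (y - x * z) / (sa * sc) := by
    rw [eq_div_iff (by positivity)]; linarith [lawB]
  have hcC' : Real.cos C = (z - x * y) / (sa * sb) := by
    rw [eq_div_iff (by positivity)]; linarith [lawC]
  have hvC : sa * sb * Real.cos C = z - x * y := by linarith [lawC]
  have hvA : Real.cos A * (sb * sc) = x - y * z := by linarith [lawA]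
  have hvB : Real.cos B * (sa * sc) = y - x * z := by linarith [lawB]
  -- m^2 = D
  have hm2 : m ^ 2 = 1 - x ^ 2 - y ^ 2 - z ^ 2 + 2 * x * y * z := by
    have h2 : Real.sin C ^ 2 = 1 - Real.cos C ^ 2 := Real.sin_sq C
    rw [hmdef]
    linear_combination (sa*sb)^2 * h2 - (sa*sb*Real.cos C + z - x*y) * hvC + sb^2 * Ha + (1-x^2) * Hb
  -- sin division forms
  have hsC' : Real.sin C = m / (sa * sb) := by
    rw [hmdef, eq_div_iff (by positivity)]; ring
  have hsA' : Real.sin A = m / (sb * sc) := by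
    have h1 : Real.sin A ^ 2 = 1 - Real.cos A ^ 2 := Real.sin_sq A
    have key : (Real.sin A * (sb * sc)) ^ 2 = m ^ 2 := by
      linear_combination (sb*sc)^2 * h1 - (Real.cos A*(sb*sc) + x - y*z) * hvA - hm2 + sc^2 * Hb + (1-y^2) * Hc
    have h2 : Real.sin A * (sb * sc) = m := by
      rcases sq_eq_sq_iff_eq_or_eq_neg.mp key with h' | h'
      · exact h'
      · have := mul_pos hsA (mul_pos hsb hsc); linarith
    rw [eq_div_iff (by positivity), ← h2]
  have hsB' : Real.sin B = m / (sa * sc) := by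
    have h1 : Real.sin B ^ 2 = 1 - Real.cos B ^ 2 := Real.sin_sq B
    have key : (Real.sin B * (sa * sc)) ^ 2 = m ^ 2 := by
      linear_combination (sa*sc)^2 * h1 - (Real.cos B*(sa*sc) + y - x*z) * hvB - hm2 + sc^2 * Ha + (1-x^2) * Hc
    have h2 : Real.sin B * (sa * sc) = m := by
      rcases sq_eq_sq_iff_eq_or_eq_neg.mp key with h' | h'
      · exact h'
      · have := mul_pos hsB (mul_pos hsa hsc); linarith
    rw [eq_div_iff (by positivity), ← h2]
  -- product of sines squared
  have hW : ((1:ℝ) - x^2) * (1 - y^2) * (1 - z^2) = (sa*sb*sc)^2 := by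
    linear_combination (-(sb^2*sc^2)) * Ha - ((1-x^2)*sc^2) * Hb - ((1-x^2)*(1-y^2)) * Hc
  have hWne : ((1:ℝ) - x^2) * (1 - y^2) * (1 - z^2) ≠ 0 := by
    rw [hW]
    exact pow_ne_zero _ (ne_of_gt (mul_pos (mul_pos hsa hsb) hsc))
  -- expansions of cos and sin of the angle sum
  have expandc : Real.cos (A+B+C) = Real.cos A*Real.cos B*Real.cos C
      - Real.cos A*Real.sin B*Real.sin C - Real.sin A*Real.cos B*Real.sin C
      - Real.sin A*Real.sin B*Real.cos C := by
    rw [Real.cos_add, Real.cos_add, Real.sin_add]; ring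
  have expands : Real.sin (A+B+C) = Real.sin A*Real.cos B*Real.cos C
      + Real.cos A*Real.sin B*Real.cos C + Real.cos A*Real.cos B*Real.sin C
      - Real.sin A*Real.sin B*Real.sin C := by
    rw [Real.sin_add, Real.sin_add, Real.cos_add]; ring
  have e1 : Real.cos (A+B+C) * (((1:ℝ)-x^2)*(1-y^2)*(1-z^2)) =
      (x-y*z)*(y-x*z)*(z-x*y) - m^2*((x-y*z)+(y-x*z)+(z-x*y)) := by
    rw [expandc, hcA', hcB', hcC', hsA', hsB', hsC', hW]
    field_simp
    ring
  have e2 : Real.sin (A+B+C) * (((1:ℝ)-x^2)*(1-y^2)*(1-z^2)) =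
      m * ((y-x*z)*(z-x*y) + (x-y*z)*(z-x*y) + (x-y*z)*(y-x*z) - m^2) := by
    rw [expands, hcA', hcB', hcC', hsA', hsB', hsC', hW]
    field_simp
  have h1pc : (1 + Real.cos (A+B+C)) * ((1+x)*(1+y)*(1+z)) = m^2 := by
    apply mul_right_cancel₀ hWne
    linear_combination ((1+x)*(1+y)*(1+z)) * e1
      - ((1-x^2)*(1-y^2)*(1-z^2) + ((1+x)*(1+y)*(1+z))*((x-y*z)+(y-x*z)+(z-x*y))) * hm2
  have hsinS : Real.sin (A+B+C) * ((1+x)*(1+y)*(1+z)) = -((1+x+y+z) * m) := by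
    apply mul_right_cancel₀ hWne
    linear_combination ((1+x)*(1+y)*(1+z)) * e2 - ((1+x)*(1+y)*(1+z))*m * hm2
  -- recover the product relations for the sines
  have hpB : Real.sin B * (sa*sc) = m := by rw [hsB']; field_simp
  have hpC : Real.sin C * (sa*sb) = m := by rw [hsC']; field_simp
  have hvB2 : Real.cos B * (sa*sc) = y - x*z := by linarith [hvB]
  have hvC2 : Real.cos C * (sa*sb) = z - x*y := by linarith [hvC]
  -- the sum of angles exceeds π
  have hSgt : π < A + B + C := by
    have hmul : (Real.cos A + (Real.cos B * Real.cos C - Real.sin B * Real.sin C))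
        * (sa^2*(sb*sc)) = m^2 * (x - 1) := by
      linear_combination sa^2 * hvA + (Real.cos C*(sa*sb)) * hvB2 + (y-x*z) * hvC2
        - (Real.sin C*(sa*sb)) * hpB - m * hpC + (x - y*z) * Ha - x * hm2
    have h3 : m^2 * (x-1) < 0 :=
      mul_neg_of_pos_of_neg (by positivity) (by linarith)
    have h4 : 0 < sa^2*(sb*sc) := by positivity
    have hsum : Real.cos A + (Real.cos B * Real.cos C - Real.sin B * Real.sin C) < 0 := by
      have hL : Real.cos A + (Real.cos B * Real.cos C - Real.sin B * Real.sin C)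
          = m^2*(x-1) / (sa^2*(sb*sc)) := by
        rw [eq_div_iff (ne_of_gt h4)]; exact hmul
      rw [hL]; exact div_neg_of_neg_of_pos h3 h4
    rcases le_or_gt π (B+C) with hbc | hbc
    · linarith
    · have h1 : Real.cos A < Real.cos (π - (B+C)) := by
        rw [Real.cos_pi_sub, Real.cos_add]; linarith
      have h2 : π - (B+C) < A := by
        by_contra hcon
        push_neg at hcon
        have := Real.cos_le_cos_of_nonneg_of_le_pi (le_of_lt hA0) (by linarith) hcon
        linarith
      linarith
  -- half of the sum
  set th := (A+B+C)/2 with hthdef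
  have hcosth_neg : Real.cos th < 0 := by
    apply Real.cos_neg_of_pi_div_two_lt_of_lt
    · rw [hthdef]; linarith
    · rw [hthdef]; linarith
  -- half-angle quantities
  set c1 := Real.cos (a/2) with hc1def
  set c2 := Real.cos (b/2) with hc2def
  set c3 := Real.cos (c/2) with hc3def
  set s1 := Real.sin (a/2) with hs1def
  set s2 := Real.sin (b/2) with hs2def
  have hxa : x = 2*c1^2 - 1 := by
    rw [hxdef, show a = 2*(a/2) by ring, Real.cos_two_mul]
  have hya : y = 2*c2^2 - 1 := by
    rw [hydef, show b = 2*(b/2) by ring, Real.cos_two_mul]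
  have hza : z = 2*c3^2 - 1 := by
    rw [hzdef, show c = 2*(c/2) by ring, Real.cos_two_mul]
  have hsah : sa = 2*s1*c1 := by
    rw [hsadef, show a = 2*(a/2) by ring, Real.sin_two_mul]
  have hsbh : sb = 2*s2*c2 := by
    rw [hsbdef, show b = 2*(b/2) by ring, Real.sin_two_mul]
  have hP8 : (1+x)*(1+y)*(1+z) = 8*(c1*c2*c3)^2 := by
    rw [hxa, hya, hza]; ring
  have hcpos : 0 < c1*c2*c3 := by positivity
  -- cos of the half sum
  have hcs : Real.cos th ^ 2 = (1 + Real.cos (A+B+C))/2 := by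
    have h := Real.cos_sq th
    rw [show 2*th = A+B+C by rw [hthdef]; ring] at h
    linarith
  have hsq : Real.cos th ^ 2 = (m/(4*(c1*c2*c3)))^2 := by
    have hthis : (1 + Real.cos (A+B+C)) * (8*(c1*c2*c3)^2) = m^2 := by
      rw [← hP8]; exact h1pc
    rw [hcs, div_pow, eq_div_iff (by positivity)]
    linear_combination hthis
  have hcosthval : Real.cos th = -(m/(4*(c1*c2*c3))) := by
    rcases sq_eq_sq_iff_eq_or_eq_neg.mp hsq with h' | h'
    · exfalso
      have : 0 < m/(4*(c1*c2*c3)) := by positivity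
      linarith
    · exact h'
  have hcosthm : Real.cos th * (4*(c1*c2*c3)) = -m := by
    rw [hcosthval]; field_simp
  -- sin of the half sum
  have h2s : Real.sin (A+B+C) = 2*Real.sin th*Real.cos th := by
    rw [show A+B+C = 2*th by rw [hthdef]; ring, Real.sin_two_mul]
  have h5 : 2*Real.sin th*Real.cos th * (8*(c1*c2*c3)^2) = -((1+x+y+z)*m) := by
    rw [← h2s, ← hP8]; exact hsinS
  have h7 : (Real.sin th * (4*(c1*c2*c3)) - (1+x+y+z)) * m = 0 := by
    linear_combination (-1) * h5 + 4*(c1*c2*c3)*Real.sin th * hcosthm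
  have hsinthm : Real.sin th * (4*(c1*c2*c3)) = (1+x+y+z) := by
    rcases mul_eq_zero.mp h7 with h | h
    · linarith
    · exact absurd h (ne_of_gt hmpos)
  have hsinthval : Real.sin th = (1+x+y+z)/(4*(c1*c2*c3)) := by
    rw [eq_div_iff (by positivity)]; exact hsinthm
  -- final assembly
  have hk4 : 1+x+y+z = 4*(c1*c2)*(c1*c2 + s1*s2*Real.cos C) := by
    linear_combination (-1) * hvC + (1+y) * hxa + 2*c1^2 * hya
      + Real.cos C*sb * hsah + 2*s1*c1*Real.cos C * hsbh
  have hm4 : m = 4*(c1*c2)*(s1*s2*Real.sin C) := by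
    rw [hmdef, hsah, hsbh]; ring
  have hcot : Real.cot (a/2)*Real.cot (b/2) + Real.cos C
      = (c1*c2 + s1*s2*Real.cos C)/(s1*s2) := by
    rw [Real.cot_eq_cos_div_sin, Real.cot_eq_cos_div_sin, ← hc1def, ← hc2def, ← hs1def, ← hs2def]
    field_simp
  have harg : (A + B + C - π)/2 = th - π/2 := by rw [hthdef]; ring
  rw [harg, Real.tan_eq_sin_div_cos, Real.sin_sub, Real.cos_sub,
    Real.sin_pi_div_two, Real.cos_pi_div_two, hcot]
  rw [hcosthval, hsinthval, hm4, hk4]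
  rcases eq_or_ne (c1*c2 + s1*s2*Real.cos C) 0 with hbeta | hbeta
  · rw [hbeta]
    simp
  · field_simp
    linear_combination (s1*s2*Real.sin C) * mul_inv_cancel₀ hbeta
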